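/- If ψ : [z₁, z₂] → ℂ is continuously differentiable with ψ(z₁) = 0 = ψ(z₂), then ∫_{z₁}^{z₂} |ψ(z)|² dz ≤ ((z₂ − z₁)²/π²) · ∫_{z₁}^{z₂} |ψ′(z)|² dz. -/

import Mathlib

open Real intervalIntegral MeasureTheory Set Complex Filter

lemma paste_closed {α β : Type*} [TopologicalSpace α] [TopologicalSpace β]
    {f : α → β} {s t : Set α} (hs : IsClosed s) (ht : IsClosed t)
    (h1 : ContinuousOn f s) (h2 : ContinuousOn f t) : ContinuousOn f (s ∪ t) := by
  intro x hx
  apply ContinuousWithinAt.union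
  · by_cases h : x ∈ s
    · exact h1 x h
    · exact continuousWithinAt_of_notMem_closure (by rwa [hs.closure_eq])
  · by_cases h : x ∈ t
    · exact h2 x h
    · exact continuousWithinAt_of_notMem_closure (by rwa [ht.closure_eq])

lemma parseval_circle {T : ℝ} [hT : Fact (0 < T)] (g : C(AddCircle T, ℂ)) :
    Summable (fun n : ℤ => ‖fourierCoeff (⇑g) n‖ ^ 2) ∧
    ∑' n : ℤ, ‖fourierCoeff (⇑g) n‖ ^ 2 = ∫ t, ‖g t‖ ^ 2 ∂AddCircle.haarAddCircle := by
  set gL : Lp ℂ 2 (AddCircle.haarAddCircle) :=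
    ContinuousMap.toLp (E := ℂ) 2 AddCircle.haarAddCircle ℂ g with hgL
  have hae : (gL : AddCircle T → ℂ) =ᵐ[AddCircle.haarAddCircle] ⇑g :=
    ContinuousMap.coeFn_toLp (p := 2) (𝕜 := ℂ) AddCircle.haarAddCircle g
  have hcoef : ∀ n : ℤ, fourierCoeff (gL : AddCircle T → ℂ) n = fourierCoeff (⇑g) n := by
    intro n
    unfold fourierCoeff
    apply MeasureTheory.integral_congr_ae
    filter_upwards [hae] with t ht
    rw [ht]
  constructor
  · have hmem := lp.memℓp (fourierBasis.repr gL)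
    have hsum := hmem.summable (by norm_num : 0 < (2 : ENNReal).toReal)
    have : ∀ n : ℤ, ‖fourierBasis.repr gL n‖ ^ (2 : ENNReal).toReal
        = ‖fourierCoeff (⇑g) n‖ ^ 2 := by
      intro n
      rw [fourierBasis_repr, hcoef]
      norm_num [Real.rpow_natCast]
    exact (summable_congr (fun n => (this n))).mp hsum
  · have h := tsum_sq_fourierCoeff gL
    simp_rw [hcoef] at h
    rw [h]
    apply MeasureTheory.integral_congr_ae
    filter_upwards [hae] with t ht
    rw [ht]

lemma fourierCoeffOn_congr {a b b' : ℝ} (hab : a < b) (hab' : a < b') (hbb : b = b')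
    (f : ℝ → ℂ) (n : ℤ) : fourierCoeffOn hab f n = fourierCoeffOn hab' f n := by
  subst hbb; rfl

lemma parseval_interval {a b : ℝ} (hab : a < b) {f : ℝ → ℂ}
    (hf : ContinuousOn f (Set.Icc a b)) (hfb : f a = f b) :
    Summable (fun n : ℤ => ‖fourierCoeffOn hab f n‖ ^ 2) ∧
    (∫ x in a..b, ‖f x‖ ^ 2) = (b - a) * ∑' n : ℤ, ‖fourierCoeffOn hab f n‖ ^ 2 := by
  haveI : Fact (0 < b - a) := ⟨by linarith⟩
  have hab' : a + (b - a) = b := by ring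
  have hper : f a = f (a + (b - a)) := by rw [hab']; exact hfb
  have hconIcc : ContinuousOn f (Set.Icc a (a + (b - a))) := by rwa [hab']
  set g : C(AddCircle (b - a), ℂ) :=
    ⟨AddCircle.liftIco (b - a) a f, AddCircle.liftIco_continuous hper hconIcc⟩ with hg
  have hcoef : ∀ n : ℤ, fourierCoeff (⇑g) n = fourierCoeffOn hab f n := by
    intro n
    exact (fourierCoeff_liftIco_eq (T := b - a) (a := a) f n).trans
      (fourierCoeffOn_congr _ hab hab' f n)
  obtain ⟨hsum, hps⟩ := parseval_circle g
  constructor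
  · exact (summable_congr (fun n => by rw [hcoef n])).mp hsum
  · have hint : (∫ x in a..b, ‖f x‖ ^ 2) = ∫ x in a..b, ‖g (x : AddCircle (b - a))‖ ^ 2 := by
      apply intervalIntegral.integral_congr_ae
      have hb : {b}ᶜ ∈ ae (volume : Measure ℝ) :=
        MeasureTheory.compl_mem_ae_iff.mpr (measure_singleton b)
      filter_upwards [hb] with x hx hmem
      rw [Set.uIoc_of_le hab.le] at hmem
      have hxIco : x ∈ Set.Ico a (a + (b - a)) := by
        rw [hab']
        exact ⟨hmem.1.le, lt_of_le_of_ne hmem.2 hx⟩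
      rw [show (⇑g) = AddCircle.liftIco (b - a) a f from rfl,
        AddCircle.liftIco_coe_apply hxIco]
    have hpre : (∫ x in a..b, ‖g (x : AddCircle (b - a))‖ ^ 2)
        = ∫ t : AddCircle (b - a), ‖g t‖ ^ 2 ∂volume := by
      have := AddCircle.intervalIntegral_preimage (b - a) a (fun t => ‖g t‖ ^ 2)
      rwa [hab'] at this
    have hvol : (∫ t : AddCircle (b - a), ‖g t‖ ^ 2 ∂volume)
        = (b - a) * ∫ t, ‖g t‖ ^ 2 ∂AddCircle.haarAddCircle := by
      rw [AddCircle.volume_eq_smul_haarAddCircle, MeasureTheory.integral_smul_measure,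
        ENNReal.toReal_ofReal (by linarith : (0:ℝ) ≤ b - a), smul_eq_mul]
    rw [hint, hpre, hvol]
    congr 1
    rw [← hps]
    exact tsum_congr fun n => by rw [hcoef n]


theorem stmt_1 (z₁ z₂ : ℝ) (hz : z₁ < z₂) (ψ ψ' : ℝ → ℂ)
    (hderiv : ∀ z ∈ Set.Icc z₁ z₂, HasDerivAt ψ (ψ' z) z)
    (hcont : ContinuousOn ψ' (Set.Icc z₁ z₂))
    (h1 : ψ z₁ = 0) (h2 : ψ z₂ = 0) :
    ∫ z in z₁..z₂, ‖ψ z‖ ^ 2 ≤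
      ((z₂ - z₁) ^ 2 / π ^ 2) * ∫ z in z₁..z₂, ‖ψ' z‖ ^ 2 := by
  set L : ℝ := z₂ - z₁ with hL
  have hL0 : 0 < L := by simp [hL]; linarith
  set a : ℝ := 2 * z₁ - z₂ with ha
  have hab : a < z₂ := by simp [ha]; linarith
  have haz : a < z₁ := by simp [ha]; linarith
  have hT : z₂ - a = 2 * L := by simp [ha, hL]; ring
  set F : ℝ → ℂ := fun z => if z ≤ z₁ then -ψ (2 * z₁ - z) else ψ z with hF
  set G : ℝ → ℂ := fun z => if z ≤ z₁ then ψ' (2 * z₁ - z) else ψ' z with hG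
  -- basic reflection facts
  have hmaps : ∀ z ∈ Set.Icc a z₁, 2 * z₁ - z ∈ Set.Icc z₁ z₂ := by
    intro z hz'
    constructor <;> [linarith [hz'.2]; (simp [ha] at hz'; linarith [hz'.1])]
  have hψc : ContinuousOn ψ (Set.Icc z₁ z₂) :=
    fun x hx => (hderiv x hx).continuousAt.continuousWithinAt
  -- F and ψ agree on [z₁, z₂]
  have hFψ : Set.EqOn F ψ (Set.Icc z₁ z₂) := by
    intro z hz'
    by_cases hle : z ≤ z₁
    · have : z = z₁ := le_antisymm hle hz'.1
      subst this
      simp [hF, h1, show 2 * z - z = z by ring]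
    · simp [hF, hle]
  have hFρ : Set.EqOn F (fun z => -ψ (2 * z₁ - z)) (Set.Icc a z₁) := by
    intro z hz'
    simp [hF, hz'.2]
  have hGψ : Set.EqOn G ψ' (Set.Icc z₁ z₂) := by
    intro z hz'
    by_cases hle : z ≤ z₁
    · have : z = z₁ := le_antisymm hle hz'.1
      subst this
      simp [hG, show 2 * z - z = z by ring]
    · simp [hG, hle]
  have hGρ : Set.EqOn G (fun z => ψ' (2 * z₁ - z)) (Set.Icc a z₁) := by
    intro z hz'
    simp [hG, hz'.2]
  have hrefl : ContinuousOn (fun z : ℝ => 2 * z₁ - z) (Set.Icc a z₁) :=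
    (continuous_const.sub continuous_id).continuousOn
  have hIcc : Set.Icc a z₁ ∪ Set.Icc z₁ z₂ = Set.Icc a z₂ :=
    Set.Icc_union_Icc_eq_Icc haz.le hz.le
  -- continuity of F and G
  have hFcont : ContinuousOn F (Set.Icc a z₂) := by
    rw [← hIcc]
    refine paste_closed isClosed_Icc isClosed_Icc ?_ ?_
    · exact ((hψc.comp hrefl (fun z hz' => hmaps z hz')).neg).congr hFρ
    · exact hψc.congr hFψ
  have hGcont : ContinuousOn G (Set.Icc a z₂) := by
    rw [← hIcc]
    refine paste_closed isClosed_Icc isClosed_Icc ?_ ?_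
    · exact (hcont.comp hrefl (fun z hz' => hmaps z hz')).congr hGρ
    · exact hcont.congr hGψ
  -- endpoint values
  have hFa : F a = 0 := by
    have : (2 * z₁ - a) = z₂ := by rw [ha]; ring
    simp [hF, haz.le, this, h2]
  have hFb : F z₂ = 0 := by simp [hF, not_le.mpr hz, h2]
  have hGab : G a = G z₂ := by
    have : (2 * z₁ - a) = z₂ := by rw [ha]; ring
    simp [hG, haz.le, not_le.mpr hz, this]
  have hFψ' : ∀ z, z₁ ≤ z → F z = ψ z := by
    intro z hz'
    rcases eq_or_lt_of_le hz' with rfl | hlt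
    · simp [hF, h1, show 2 * z₁ - z₁ = z₁ by ring]
    · simp [hF, not_le.mpr hlt]
  -- derivative of F is G on the interior
  have hFG : ∀ x ∈ Set.Ioo a z₂, HasDerivAt F (G x) x := by
    intro x hx
    rcases lt_trichotomy x z₁ with hlt | heq | hgt
    · have hmem : 2 * z₁ - x ∈ Set.Icc z₁ z₂ := hmaps x ⟨hx.1.le, hlt.le⟩
      have hd : HasDerivAt (fun z : ℝ => -ψ (2 * z₁ - z)) (ψ' (2 * z₁ - x)) x := by
        have hcomp := HasDerivAt.comp_const_sub (2 * z₁) x (hderiv _ hmem)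
        simpa [Pi.neg_def] using hcomp.neg
      have hev : F =ᶠ[nhds x] (fun z : ℝ => -ψ (2 * z₁ - z)) :=
        Filter.eventuallyEq_of_mem (Iio_mem_nhds hlt) (fun z hz' => by
          simp [hF, le_of_lt (Set.mem_Iio.mp hz')])
      have hres : HasDerivAt F (ψ' (2 * z₁ - x)) x := hd.congr_of_eventuallyEq hev
      have : G x = ψ' (2 * z₁ - x) := by simp [hG, hlt.le]
      rw [this]; exact hres
    · subst heq
      have hd1 : HasDerivAt ψ (ψ' x) x := hderiv x ⟨le_refl x, hz.le⟩
      have hleft : HasDerivWithinAt F (ψ' x) (Set.Iic x) x := by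
        have hd : HasDerivAt (fun z : ℝ => -ψ (2 * x - z)) (ψ' x) x := by
          have h0 : HasDerivAt ψ (ψ' x) (2 * x - x) := by
            rw [show 2 * x - x = x by ring]; exact hd1
          have hcomp := HasDerivAt.comp_const_sub (2 * x) x h0
          simpa [Pi.neg_def] using hcomp.neg
        exact hd.hasDerivWithinAt.congr (fun z hz' => by
          simp [hF, Set.mem_Iic.mp hz']) (by simp [hF])
      have hright : HasDerivWithinAt F (ψ' x) (Set.Ici x) x :=
        hd1.hasDerivWithinAt.congr (fun z hz' => hFψ' z hz') (hFψ' x (le_refl x))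
      have hhh := hleft.union hright
      rw [Set.Iic_union_Ici] at hhh
      have hres : HasDerivAt F (ψ' x) x := hasDerivWithinAt_univ.mp hhh
      have : G x = ψ' x := by simp [hG, show 2 * x - x = x by ring]
      rw [this]; exact hres
    · have hev : F =ᶠ[nhds x] ψ :=
        Filter.eventuallyEq_of_mem (Ioi_mem_nhds hgt) (fun z hz' => hFψ' z (le_of_lt hz'))
      have hres : HasDerivAt F (ψ' x) x :=
        (hderiv x ⟨hgt.le, hx.2.le⟩).congr_of_eventuallyEq hev
      have : G x = ψ' x := by simp [hG, not_le.mpr hgt]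
      rw [this]; exact hres
  -- integrability
  have hFint : IntervalIntegrable F volume a z₂ := by
    apply ContinuousOn.intervalIntegrable
    rwa [Set.uIcc_of_le hab.le]
  have hGint : IntervalIntegrable G volume a z₂ := by
    apply ContinuousOn.intervalIntegrable
    rwa [Set.uIcc_of_le hab.le]
  -- reflection substitution
  have hsubC : ∀ g : ℝ → ℂ, (∫ z in a..z₁, g (2 * z₁ - z)) = ∫ z in z₁..z₂, g z := by
    intro g
    have h := intervalIntegral.integral_comp_sub_left (a := a) (b := z₁) g (2 * z₁)
    rwa [show 2 * z₁ - z₁ = z₁ by ring, show 2 * z₁ - a = z₂ by rw [ha]; ring] at h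
  have hsubR : ∀ g : ℝ → ℝ, (∫ z in a..z₁, g (2 * z₁ - z)) = ∫ z in z₁..z₂, g z := by
    intro g
    have h := intervalIntegral.integral_comp_sub_left (a := a) (b := z₁) g (2 * z₁)
    rwa [show 2 * z₁ - z₁ = z₁ by ring, show 2 * z₁ - a = z₂ by rw [ha]; ring] at h
  -- zeroth coefficient of F vanishes
  have hc0 : fourierCoeffOn hab F 0 = 0 := by
    rw [fourierCoeffOn_eq_integral]
    simp only [neg_zero, fourier_zero, one_smul]
    have hi1 : IntervalIntegrable F volume a z₁ := by
      apply hFint.mono_set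
      rw [Set.uIcc_of_le haz.le, Set.uIcc_of_le hab.le]
      exact Set.Icc_subset_Icc le_rfl hz.le
    have hi2 : IntervalIntegrable F volume z₁ z₂ := by
      apply hFint.mono_set
      rw [Set.uIcc_of_le hz.le, Set.uIcc_of_le hab.le]
      exact Set.Icc_subset_Icc haz.le le_rfl
    have hsplit : (∫ z in a..z₁, F z) + (∫ z in z₁..z₂, F z) = ∫ z in a..z₂, F z :=
      intervalIntegral.integral_add_adjacent_intervals hi1 hi2
    have hl : (∫ z in a..z₁, F z) = -∫ z in z₁..z₂, ψ z := by
      rw [intervalIntegral.integral_congr (by rwa [Set.uIcc_of_le haz.le] : Set.EqOn F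
        (fun z => -ψ (2 * z₁ - z)) (Set.uIcc a z₁))]
      rw [intervalIntegral.integral_neg ]
      rw [hsubC ψ]
    have hr : (∫ z in z₁..z₂, F z) = ∫ z in z₁..z₂, ψ z :=
      intervalIntegral.integral_congr (by rwa [Set.uIcc_of_le hz.le])
    rw [← hsplit, hl, hr]
    simp
  -- squared-norm integrals double
  have hFnorm : (∫ z in a..z₂, ‖F z‖ ^ 2) = 2 * ∫ z in z₁..z₂, ‖ψ z‖ ^ 2 := by
    have hc : ContinuousOn (fun z => ‖F z‖ ^ 2) (Set.Icc a z₂) := (hFcont.norm).pow 2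
    have hi1 : IntervalIntegrable (fun z => ‖F z‖ ^ 2) volume a z₁ := by
      apply ContinuousOn.intervalIntegrable
      rw [Set.uIcc_of_le haz.le]
      exact hc.mono (Set.Icc_subset_Icc le_rfl hz.le)
    have hi2 : IntervalIntegrable (fun z => ‖F z‖ ^ 2) volume z₁ z₂ := by
      apply ContinuousOn.intervalIntegrable
      rw [Set.uIcc_of_le hz.le]
      exact hc.mono (Set.Icc_subset_Icc haz.le le_rfl)
    have hsplit : (∫ z in a..z₁, ‖F z‖ ^ 2) + (∫ z in z₁..z₂, ‖F z‖ ^ 2)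
        = ∫ z in a..z₂, ‖F z‖ ^ 2 :=
      intervalIntegral.integral_add_adjacent_intervals hi1 hi2
    have hl : (∫ z in a..z₁, ‖F z‖ ^ 2) = ∫ z in z₁..z₂, ‖ψ z‖ ^ 2 := by
      have heq : Set.EqOn (fun z => ‖F z‖ ^ 2) (fun z => ‖ψ (2 * z₁ - z)‖ ^ 2)
          (Set.uIcc a z₁) := by
        rw [Set.uIcc_of_le haz.le]
        intro z hz'
        simp only [hFρ hz', norm_neg]
      rw [intervalIntegral.integral_congr heq]
      exact hsubR (fun z => ‖ψ z‖ ^ 2)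
    have hr : (∫ z in z₁..z₂, ‖F z‖ ^ 2) = ∫ z in z₁..z₂, ‖ψ z‖ ^ 2 := by
      have heq : Set.EqOn (fun z => ‖F z‖ ^ 2) (fun z => ‖ψ z‖ ^ 2) (Set.uIcc z₁ z₂) := by
        rw [Set.uIcc_of_le hz.le]
        intro z hz'
        simp only [hFψ hz']
      exact intervalIntegral.integral_congr heq
    rw [← hsplit, hl, hr]; ring
  have hGnorm : (∫ z in a..z₂, ‖G z‖ ^ 2) = 2 * ∫ z in z₁..z₂, ‖ψ' z‖ ^ 2 := by
    have hc : ContinuousOn (fun z => ‖G z‖ ^ 2) (Set.Icc a z₂) := (hGcont.norm).pow 2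
    have hi1 : IntervalIntegrable (fun z => ‖G z‖ ^ 2) volume a z₁ := by
      apply ContinuousOn.intervalIntegrable
      rw [Set.uIcc_of_le haz.le]
      exact hc.mono (Set.Icc_subset_Icc le_rfl hz.le)
    have hi2 : IntervalIntegrable (fun z => ‖G z‖ ^ 2) volume z₁ z₂ := by
      apply ContinuousOn.intervalIntegrable
      rw [Set.uIcc_of_le hz.le]
      exact hc.mono (Set.Icc_subset_Icc haz.le le_rfl)
    have hsplit : (∫ z in a..z₁, ‖G z‖ ^ 2) + (∫ z in z₁..z₂, ‖G z‖ ^ 2)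
        = ∫ z in a..z₂, ‖G z‖ ^ 2 :=
      intervalIntegral.integral_add_adjacent_intervals hi1 hi2
    have hl : (∫ z in a..z₁, ‖G z‖ ^ 2) = ∫ z in z₁..z₂, ‖ψ' z‖ ^ 2 := by
      have heq : Set.EqOn (fun z => ‖G z‖ ^ 2) (fun z => ‖ψ' (2 * z₁ - z)‖ ^ 2)
          (Set.uIcc a z₁) := by
        rw [Set.uIcc_of_le haz.le]
        intro z hz'
        simp only [hGρ hz', norm_neg]
      rw [intervalIntegral.integral_congr heq]
      exact hsubR (fun z => ‖ψ' z‖ ^ 2)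
    have hr : (∫ z in z₁..z₂, ‖G z‖ ^ 2) = ∫ z in z₁..z₂, ‖ψ' z‖ ^ 2 := by
      have heq : Set.EqOn (fun z => ‖G z‖ ^ 2) (fun z => ‖ψ' z‖ ^ 2) (Set.uIcc z₁ z₂) := by
        rw [Set.uIcc_of_le hz.le]
        intro z hz'
        simp only [hGψ hz']
      exact intervalIntegral.integral_congr heq
    rw [← hsplit, hl, hr]; ring
  -- coefficient bound
  have hbound : ∀ n : ℤ, ‖fourierCoeffOn hab F n‖ ^ 2
      ≤ (L / π) ^ 2 * ‖fourierCoeffOn hab G n‖ ^ 2 := by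
    intro n
    rcases eq_or_ne n 0 with rfl | hn
    · rw [hc0]
      simp only [norm_zero, ne_eq, OfNat.ofNat_ne_zero, not_false_eq_true, zero_pow]
      positivity
    · have hff : ∀ x ∈ Set.Ioo (min a z₂) (max a z₂), HasDerivAt F (G x) x := by
        rwa [min_eq_left hab.le, max_eq_right hab.le]
      have hrel := fourierCoeffOn_of_hasDerivAt_Ioo hab hn
        (by rwa [Set.uIcc_of_le hab.le]) hff hGint
      rw [hFa, hFb] at hrel
      have hrel' : fourierCoeffOn hab F n
          = 1 / (-2 * ↑π * I * ↑n) * (-(↑(z₂ - a) * fourierCoeffOn hab G n)) := by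
        rw [hrel]
        push_cast
        ring
      have e1 : ‖(-2 : ℂ) * ↑π * I * ↑n‖ = 2 * π * |(n : ℝ)| := by
        rw [show (-2 : ℂ) * ↑π * I * ↑n = -(((2 * π : ℝ) : ℂ) * (I * (n : ℂ))) by
          push_cast; ring]
        rw [norm_neg, norm_mul, norm_mul, Complex.norm_real, Complex.norm_I, one_mul,
          Complex.norm_intCast, Real.norm_eq_abs, abs_of_pos (by positivity)]
      have e2 : ‖((z₂ - a : ℝ) : ℂ)‖ = z₂ - a := by
        rw [Complex.norm_real, Real.norm_eq_abs, abs_of_pos (by linarith)]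
      have hnorm : ‖fourierCoeffOn hab F n‖
          = 1 / (2 * π * |(n : ℝ)|) * ((z₂ - a) * ‖fourierCoeffOn hab G n‖) := by
        rw [hrel', norm_mul, norm_neg, norm_mul, norm_div, norm_one, e1, e2]
      have h1n : (1 : ℝ) ≤ |(n : ℝ)| := by
        rw [← Int.cast_abs]
        exact_mod_cast Int.one_le_abs hn
      have hπ : 0 < π := Real.pi_pos
      have hle : ‖fourierCoeffOn hab F n‖ ≤ (L / π) * ‖fourierCoeffOn hab G n‖ := by
        rw [hnorm, hT]
        have hg0 : (0 : ℝ) ≤ ‖fourierCoeffOn hab G n‖ := norm_nonneg _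
        have hd1 : 1 / (2 * π * |(n : ℝ)|) ≤ 1 / (2 * π) := by
          apply one_div_le_one_div_of_le (by positivity)
          nlinarith
        calc 1 / (2 * π * |(n : ℝ)|) * (2 * L * ‖fourierCoeffOn hab G n‖)
            ≤ 1 / (2 * π) * (2 * L * ‖fourierCoeffOn hab G n‖) := by
              apply mul_le_mul_of_nonneg_right hd1 (by positivity)
          _ = (L / π) * ‖fourierCoeffOn hab G n‖ := by
              field_simp
      calc ‖fourierCoeffOn hab F n‖ ^ 2 ≤ ((L / π) * ‖fourierCoeffOn hab G n‖) ^ 2 :=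
            pow_le_pow_left₀ (norm_nonneg _) hle 2
        _ = (L / π) ^ 2 * ‖fourierCoeffOn hab G n‖ ^ 2 := by ring
  -- assemble via Parseval
  obtain ⟨sumF, eqF⟩ := parseval_interval hab hFcont (hFa.trans hFb.symm)
  obtain ⟨sumG, eqG⟩ := parseval_interval hab hGcont hGab
  have hπ : 0 < π := Real.pi_pos
  have htsum : ∑' n : ℤ, ‖fourierCoeffOn hab F n‖ ^ 2
      ≤ (L / π) ^ 2 * ∑' n : ℤ, ‖fourierCoeffOn hab G n‖ ^ 2 := by
    rw [← tsum_mul_left]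
    exact Summable.tsum_le_tsum hbound sumF (sumG.mul_left _)
  have key : (∫ x in a..z₂, ‖F x‖ ^ 2) ≤ (L / π) ^ 2 * ∫ x in a..z₂, ‖G x‖ ^ 2 := by
    rw [eqF, eqG]
    calc (z₂ - a) * ∑' n : ℤ, ‖fourierCoeffOn hab F n‖ ^ 2
        ≤ (z₂ - a) * ((L / π) ^ 2 * ∑' n : ℤ, ‖fourierCoeffOn hab G n‖ ^ 2) :=
          mul_le_mul_of_nonneg_left htsum (by linarith)
      _ = (L / π) ^ 2 * ((z₂ - a) * ∑' n : ℤ, ‖fourierCoeffOn hab G n‖ ^ 2) := by ring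
  rw [hFnorm, hGnorm] at key
  have hfin : (L / π) ^ 2 = (z₂ - z₁) ^ 2 / π ^ 2 := by
    rw [hL, div_pow]
  rw [← hfin]
  nlinarith [key]
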